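/- Equal total incremental error for two groups: let A ∈ ℝ^{a×n}, B ∈ ℝ^{b×n}, set A^{(1)} = A, B^{(1)} = B, and for r = 1, …, d let v_r ∈ ℝ^n be a unit vector minimizing u ↦ max(h_{A^{(r)}}(u), h_{B^{(r)}}(u)) over the unit sphere, with A^{(r+1)} = A^{(r)}(I − v_r v_rᵀ) and B^{(r+1)} = B^{(r)}(I − v_r v_rᵀ). Then the total incremental errors of the two groups are equal: Σ_{r=1}^d [λmax(A^{(r)ᵀ}A^{(r)}) − v_rᵀ A^{(r)ᵀ}A^{(r)} v_r] = Σ_{r=1}^d [λmax(B^{(r)ᵀ}B^{(r)}) − v_rᵀ B^{(r)ᵀ}B^{(r)} v_r]. -/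

import Mathlib

open Matrix

/-- The largest eigenvalue of a real symmetric matrix, via its Rayleigh-quotient
characterization: `λmax(M) = sup { vᵀ M v : ‖v‖ = 1 }`. -/
noncomputable def lamMax {n : ℕ} (M : Matrix (Fin n) (Fin n) ℝ) : ℝ :=
  sSup {r : ℝ | ∃ v : Fin n → ℝ, v ⬝ᵥ v = 1 ∧ r = v ⬝ᵥ (M *ᵥ v)}

/-- The rank-1 fair loss `h_M(v) = λmax(MᵀM) − vᵀ(MᵀM)v`. -/
noncomputable def fairLoss {m n : ℕ} (M : Matrix (Fin m) (Fin n) ℝ) (v : Fin n → ℝ) : ℝ :=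
  lamMax (Mᵀ * M) - v ⬝ᵥ ((Mᵀ * M) *ᵥ v)

lemma lamMax_bdd {n : ℕ} (M : Matrix (Fin n) (Fin n) ℝ) :
    BddAbove {r : ℝ | ∃ v : Fin n → ℝ, v ⬝ᵥ v = 1 ∧ r = v ⬝ᵥ (M *ᵥ v)} := by
  refine ⟨∑ i, ∑ j, |M i j|, ?_⟩
  rintro r ⟨v, hv, rfl⟩
  have habs : ∀ i, |v i| ≤ 1 := by
    intro i
    have h1 : v i ^ 2 ≤ 1 := by
      rw [← hv]
      have : v ⬝ᵥ v = ∑ k, v k ^ 2 := by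
        simp [dotProduct, sq]
      rw [this]
      exact Finset.single_le_sum (f := fun k => v k ^ 2) (fun k _ => sq_nonneg _)
        (Finset.mem_univ i)
    nlinarith [abs_nonneg (v i), sq_abs (v i)]
  have : v ⬝ᵥ (M *ᵥ v) = ∑ i, ∑ j, v i * (M i j * v j) := by
    simp [dotProduct, Matrix.mulVec, Finset.mul_sum]
  rw [this]
  refine Finset.sum_le_sum fun i _ => Finset.sum_le_sum fun j _ => ?_
  calc v i * (M i j * v j) ≤ |v i * (M i j * v j)| := le_abs_self _
    _ = |v i| * |M i j| * |v j| := by rw [abs_mul, abs_mul]; ring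
    _ ≤ 1 * |M i j| * 1 := by
        have h1 := habs i; have h2 := habs j
        have h0 := abs_nonneg (M i j)
        have h3 := abs_nonneg (v i); have h4 := abs_nonneg (v j)
        nlinarith [mul_le_mul h1 h2 h4 (zero_le_one), mul_nonneg h3 h0]
    _ = |M i j| := by ring

lemma le_lamMax {n : ℕ} (M : Matrix (Fin n) (Fin n) ℝ) (v : Fin n → ℝ) (hv : v ⬝ᵥ v = 1) :
    v ⬝ᵥ (M *ᵥ v) ≤ lamMax M :=
  le_csSup (lamMax_bdd M) ⟨v, hv, rfl⟩

lemma dot_symm {n : ℕ} (S : Matrix (Fin n) (Fin n) ℝ) (hS : Sᵀ = S) (x y : Fin n → ℝ) :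
    x ⬝ᵥ (S *ᵥ y) = y ⬝ᵥ (S *ᵥ x) := by
  rw [Matrix.dotProduct_mulVec, ← Matrix.mulVec_transpose, hS, dotProduct_comm]

lemma quad_expand {n : ℕ} (S : Matrix (Fin n) (Fin n) ℝ) (x y : Fin n → ℝ) (t : ℝ) :
    (x + t • y) ⬝ᵥ (S *ᵥ (x + t • y)) =
      x ⬝ᵥ (S *ᵥ x) + t * (x ⬝ᵥ (S *ᵥ y)) + t * (y ⬝ᵥ (S *ᵥ x)) + t^2 * (y ⬝ᵥ (S *ᵥ y)) := by
  simp [Matrix.mulVec_add, Matrix.mulVec_smul, dotProduct_add, add_dotProduct,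
    dotProduct_smul, smul_dotProduct, smul_eq_mul]
  ring

lemma quad_smul {n : ℕ} (S : Matrix (Fin n) (Fin n) ℝ) (x : Fin n → ℝ) (s : ℝ) :
    (s • x) ⬝ᵥ (S *ᵥ (s • x)) = s^2 * (x ⬝ᵥ (S *ᵥ x)) := by
  simp [Matrix.mulVec_smul, dotProduct_smul, smul_dotProduct, smul_eq_mul]; ring


lemma exists_t (c D δ c' E : ℝ) (hkeyD : c = 0 → 0 < D) (hδ : 0 < δ) :
    ∃ t : ℝ, |t| ≤ 1 ∧ 0 < 2*c*t + D*t^2 ∧ δ + 2*c'*t + E*t^2 > 0 := by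
  set β : ℝ := δ / (2*|c'| + |E| + 1) with hβ
  have hden : 0 < 2*|c'| + |E| + 1 := by positivity
  have hβpos : 0 < β := div_pos hδ hden
  have key2 : ∀ t : ℝ, |t| ≤ 1 → |t| < β → δ + 2*c'*t + E*t^2 > 0 := by
    intro t ht1 htβ
    have habs1 : |2*c'*t| = 2 * |c'| * |t| := by
      rw [abs_mul, abs_mul, abs_two]
    have h1 : 2*c'*t ≥ -(2 * |c'| * |t|) := habs1 ▸ neg_abs_le _
    have habs2 : |E*t^2| = |E| * t^2 := by rw [abs_mul, abs_of_nonneg (sq_nonneg t)]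
    have h2a : |E| * t^2 ≤ |E| * |t| := by
      nlinarith [sq_abs t, abs_nonneg E, abs_nonneg t, mul_nonneg (abs_nonneg E) (abs_nonneg t)]
    have h2 : E*t^2 ≥ -(|E| * |t|) := by
      nlinarith [neg_abs_le (E*t^2)]
    have h3 : |t| * (2 * |c'| + |E|) < δ := by
      calc |t| * (2 * |c'| + |E|) ≤ |t| * (2*|c'| + |E| + 1) := by nlinarith [abs_nonneg t]
        _ < β * (2*|c'| + |E| + 1) := by
            rcases eq_or_lt_of_le (abs_nonneg t) with h | h
            · rw [← h]; simpa using mul_pos hβpos hden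
            · exact mul_lt_mul_of_pos_right htβ hden
        _ = δ := by rw [hβ, div_mul_cancel₀ δ (ne_of_gt hden)]
    nlinarith
  by_cases hc : c = 0
  · have hD := hkeyD hc
    have htpos : 0 < min 1 β / 2 := by positivity
    refine ⟨min 1 β / 2, ?_, ?_, ?_⟩
    · rw [abs_of_pos htpos]
      nlinarith [min_le_left 1 β]
    · rw [hc]
      nlinarith [mul_pos hD (mul_pos htpos htpos)]
    · exact key2 _ (by rw [abs_of_pos htpos]; nlinarith [min_le_left 1 β])
        (by rw [abs_of_pos htpos]; nlinarith [min_le_right 1 β])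
  · set τ : ℝ := min 1 (min β (|c| / (|D| + 1))) / 2 with hτdef
    have hcpos : 0 < |c| := abs_pos.mpr hc
    have hd1 : (0:ℝ) < |D| + 1 := by positivity
    have hτpos : 0 < τ := by
      have : 0 < min 1 (min β (|c| / (|D| + 1))) := by
        apply lt_min one_pos
        apply lt_min hβpos
        positivity
      positivity
    have hτ1 : τ ≤ 1 := by nlinarith [min_le_left 1 (min β (|c| / (|D| + 1)))]
    have hτβ : τ < β := by
      have h := min_le_right 1 (min β (|c| / (|D| + 1)))
      have h2 := min_le_left β (|c| / (|D| + 1))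
      nlinarith
    have hτc : τ * (|D| + 1) < |c| := by
      have h := min_le_right 1 (min β (|c| / (|D| + 1)))
      have h2 := min_le_right β (|c| / (|D| + 1))
      have hlt : τ < |c| / (|D| + 1) := by nlinarith
      exact (lt_div_iff₀ hd1).mp hlt
    set σ : ℝ := if 0 ≤ c then 1 else -1 with hσ
    have hσc : σ * c = |c| := by
      rcases le_or_gt 0 c with h | h
      · simp [hσ, h, abs_of_nonneg h]
      · simp [hσ, not_le.mpr h, abs_of_neg h]
    have hσ2 : σ^2 = 1 := by
      rcases le_or_gt 0 c with h | h
      · simp [hσ, h]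
      · simp [hσ, not_le.mpr h]
    have hσabs : |σ| = 1 := by
      rcases le_or_gt 0 c with h | h
      · simp [hσ, h]
      · simp [hσ, not_le.mpr h]
    refine ⟨σ * τ, ?_, ?_, key2 _ ?_ ?_⟩
    · rw [abs_mul, hσabs, one_mul, abs_of_pos hτpos]; exact hτ1
    · have h1 : 2*c*(σ*τ) = 2 * |c| * τ := by rw [← hσc]; ring
      have h2 : D*(σ*τ)^2 = D*τ^2 := by rw [mul_pow, hσ2]; ring
      have h3 : D*τ^2 ≥ -(|D| * τ^2) := by nlinarith [neg_abs_le D, sq_nonneg τ]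
      nlinarith [hτpos, hτc, mul_pos hτpos hτpos]
    · rw [abs_mul, hσabs, one_mul, abs_of_pos hτpos]; exact hτ1
    · rw [abs_mul, hσabs, one_mul, abs_of_pos hτpos]; exact hτβ

lemma dot_expand {n : ℕ} (x y : Fin n → ℝ) (t : ℝ) :
    (x + t • y) ⬝ᵥ (x + t • y) =
      x ⬝ᵥ x + t * (x ⬝ᵥ y) + t * (y ⬝ᵥ x) + t^2 * (y ⬝ᵥ y) := by
  simp [dotProduct_add, add_dotProduct, dotProduct_smul,
    smul_dotProduct, smul_eq_mul]
  ring

lemma dot_smul_self {n : ℕ} (x : Fin n → ℝ) (s : ℝ) :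
    (s • x) ⬝ᵥ (s • x) = s^2 * (x ⬝ᵥ x) := by
  simp [dotProduct_smul, smul_dotProduct, smul_eq_mul]; ring

lemma arith1 (a c bb Q t s2 : ℝ) (h : 0 < 2*c*t + (bb - Q*a)*t^2) (hs2 : s2 = 1 + Q*t^2) :
    a * s2 < a + 2*c*t + bb*t^2 := by subst hs2; nlinarith

lemma arith2 (a' c' bb' Q δ t s2 : ℝ) (h : δ + 2*c'*t + (bb' - Q*a' + Q*δ)*t^2 > 0)
    (hs2 : s2 = 1 + Q*t^2) : (a' - δ) * s2 < a' + 2*c'*t + bb'*t^2 := by subst hs2; nlinarith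

lemma le_of_min {n : ℕ} (S T : Matrix (Fin n) (Fin n) ℝ) (hS : Sᵀ = S) (hT : Tᵀ = T)
    (v : Fin n → ℝ) (hv : v ⬝ᵥ v = 1)
    (hmin : ∀ u : Fin n → ℝ, u ⬝ᵥ u = 1 →
      max (lamMax S - v ⬝ᵥ (S *ᵥ v)) (lamMax T - v ⬝ᵥ (T *ᵥ v)) ≤
        max (lamMax S - u ⬝ᵥ (S *ᵥ u)) (lamMax T - u ⬝ᵥ (T *ᵥ u))) :
    lamMax S - v ⬝ᵥ (S *ᵥ v) ≤ lamMax T - v ⬝ᵥ (T *ᵥ v) := by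
  by_contra hcon
  push_neg at hcon
  set a : ℝ := v ⬝ᵥ (S *ᵥ v) with ha
  clear_value a
  set a' : ℝ := v ⬝ᵥ (T *ᵥ v) with ha'
  clear_value a'
  set δ : ℝ := (lamMax S - a) - (lamMax T - a') with hδdef
  clear_value δ
  have hδ : 0 < δ := by rw [hδdef]; linarith
  have h0 : a' ≤ lamMax T := ha' ▸ le_lamMax T v hv
  have haS : a < lamMax S := by linarith
  have hne : {r : ℝ | ∃ u : Fin n → ℝ, u ⬝ᵥ u = 1 ∧ r = u ⬝ᵥ (S *ᵥ u)}.Nonempty :=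
    ⟨a, v, hv, ha⟩
  have haS' : a < sSup {r : ℝ | ∃ u : Fin n → ℝ, u ⬝ᵥ u = 1 ∧ r = u ⬝ᵥ (S *ᵥ u)} := haS
  obtain ⟨r, hrmem, hrgt⟩ := exists_lt_of_lt_csSup hne haS'
  obtain ⟨w, hw, rfl⟩ := hrmem
  set p : ℝ := v ⬝ᵥ w with hp
  clear_value p
  set z : Fin n → ℝ := w - p • v with hz
  clear_value z
  have hwz : w = z + p • v := by rw [hz]; abel
  have hvz : v ⬝ᵥ z = 0 := by
    rw [hz, dotProduct_sub, dotProduct_smul, hv, smul_eq_mul, mul_one, hp,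
      sub_self]
  have hzv : z ⬝ᵥ v = 0 := by rw [dotProduct_comm]; exact hvz
  set Q : ℝ := z ⬝ᵥ z with hQ
  clear_value Q
  have hQeq : p^2 + Q = 1 := by
    have hww : w ⬝ᵥ w = z ⬝ᵥ z + p * (z ⬝ᵥ v) + p * (v ⬝ᵥ z) + p^2 * (v ⬝ᵥ v) := by
      rw [hwz]; exact dot_expand z v p
    rw [hw, hvz, hzv, hv] at hww
    rw [hQ]; linarith [hww]
  have hQnn : 0 ≤ Q := by
    rw [hQ]
    have : z ⬝ᵥ z = ∑ i, z i * z i := rfl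
    rw [this]
    exact Finset.sum_nonneg fun i _ => mul_self_nonneg (z i)
  have hQpos : 0 < Q := by
    rcases lt_or_eq_of_le hQnn with h | h
    · exact h
    · exfalso
      have hz0 : z = 0 := dotProduct_self_eq_zero.mp (hQ ▸ h).symm
      have hp2 : p^2 = 1 := by rw [hQ, hz0] at hQeq; simpa using hQeq
      have hwpv : w = p • v := by rw [hwz, hz0]; simp
      rw [hwpv, quad_smul S v p, hp2] at hrgt
      rw [← ha] at hrgt
      simp at hrgt
  set c : ℝ := v ⬝ᵥ (S *ᵥ z) with hc
  clear_value c
  set bb : ℝ := z ⬝ᵥ (S *ᵥ z) with hbb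
  clear_value bb
  have hzSv : z ⬝ᵥ (S *ᵥ v) = c := (dot_symm S hS z v).trans hc.symm
  have hwSw : w ⬝ᵥ (S *ᵥ w) = bb + 2*p*c + p^2 * a := by
    rw [hwz, quad_expand S z v p, hzSv, ← hc, ← hbb, ← ha]
    ring
  have hkey : a < bb + 2*p*c + p^2 * a := by rw [← hwSw]; exact hrgt
  have hkeyD : c = 0 → 0 < bb - Q * a := by
    intro hc0
    rw [hc0] at hkey
    have hp2 : p^2 = 1 - Q := by linarith
    rw [hp2] at hkey
    nlinarith [hkey]
  set c' : ℝ := v ⬝ᵥ (T *ᵥ z) with hc'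
  clear_value c'
  set bb' : ℝ := z ⬝ᵥ (T *ᵥ z) with hbb'
  clear_value bb'
  obtain ⟨t, ht1, htS, htT⟩ := exists_t c (bb - Q*a) δ c' (bb' - Q*a' + Q*δ) hkeyD hδ
  have h1Q : (0:ℝ) < 1 + Q*t^2 := by nlinarith [hQpos, sq_nonneg t]
  set s : ℝ := Real.sqrt (1 + Q*t^2) with hs
  clear_value s
  have hs2 : s^2 = 1 + Q*t^2 := by rw [hs]; exact Real.sq_sqrt (le_of_lt h1Q)
  have hspos : 0 < s := by rw [hs]; exact Real.sqrt_pos.mpr h1Q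
  set u : Fin n → ℝ := s⁻¹ • (v + t • z) with hu
  clear_value u
  have hxx : (v + t • z) ⬝ᵥ (v + t • z) = 1 + Q * t^2 := by
    rw [dot_expand, hv, hvz, hzv, ← hQ]; ring
  have huu : u ⬝ᵥ u = 1 := by
    rw [hu, dot_smul_self, hxx, inv_pow, hs2]
    exact inv_mul_cancel₀ (ne_of_gt h1Q)
  have huS : u ⬝ᵥ (S *ᵥ u) = (s^2)⁻¹ * (a + 2*c*t + bb*t^2) := by
    rw [hu, quad_smul, quad_expand, hzSv, ← hc, ← hbb, ← ha, inv_pow]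
    ring
  have hzTv : z ⬝ᵥ (T *ᵥ v) = c' := (dot_symm T hT z v).trans hc'.symm
  have huT : u ⬝ᵥ (T *ᵥ u) = (s^2)⁻¹ * (a' + 2*c'*t + bb'*t^2) := by
    rw [hu, quad_smul, quad_expand, hzTv, ← hc', ← hbb', ← ha', inv_pow]
    ring
  have hs2pos : (0:ℝ) < s^2 := by rw [hs2]; exact h1Q
  have huSlt : lamMax S - u ⬝ᵥ (S *ᵥ u) < lamMax S - a := by
    have h1 : a * s^2 < a + 2*c*t + bb*t^2 := arith1 a c bb Q t (s^2) htS hs2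
    have h2 : a < (s^2)⁻¹ * (a + 2*c*t + bb*t^2) := by
      rw [inv_mul_eq_div, lt_div_iff₀ hs2pos]; exact h1
    rw [huS]; linarith
  have huTlt : lamMax T - u ⬝ᵥ (T *ᵥ u) < lamMax S - a := by
    have h1 : (a' - δ) * s^2 < a' + 2*c'*t + bb'*t^2 :=
      arith2 a' c' bb' Q δ t (s^2) htT hs2
    have h2 : a' - δ < (s^2)⁻¹ * (a' + 2*c'*t + bb'*t^2) := by
      rw [inv_mul_eq_div, lt_div_iff₀ hs2pos]; exact h1
    rw [huT]
    rw [hδdef] at h2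
    linarith
  have hmv := hmin u huu
  rw [max_eq_left (le_of_lt hcon)] at hmv
  have : max (lamMax S - u ⬝ᵥ (S *ᵥ u)) (lamMax T - u ⬝ᵥ (T *ᵥ u)) < lamMax S - a :=
    max_lt huSlt huTlt
  linarith

lemma eq_of_min {n : ℕ} (S T : Matrix (Fin n) (Fin n) ℝ) (hS : Sᵀ = S) (hT : Tᵀ = T)
    (v : Fin n → ℝ) (hv : v ⬝ᵥ v = 1)
    (hmin : ∀ u : Fin n → ℝ, u ⬝ᵥ u = 1 →
      max (lamMax S - v ⬝ᵥ (S *ᵥ v)) (lamMax T - v ⬝ᵥ (T *ᵥ v)) ≤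
        max (lamMax S - u ⬝ᵥ (S *ᵥ u)) (lamMax T - u ⬝ᵥ (T *ᵥ u))) :
    lamMax S - v ⬝ᵥ (S *ᵥ v) = lamMax T - v ⬝ᵥ (T *ᵥ v) := by
  refine le_antisymm (le_of_min S T hS hT v hv hmin) (le_of_min T S hT hS v hv ?_)
  intro u hu
  rw [max_comm (lamMax T - v ⬝ᵥ (T *ᵥ v)), max_comm (lamMax T - u ⬝ᵥ (T *ᵥ u))]
  exact hmin u hu


/-- equal total incremental error for two groups: with
`A⁽¹⁾ = A`, `B⁽¹⁾ = B`, `v_r` a unit minimizer of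
`u ↦ max(h_{A⁽ʳ⁾}(u), h_{B⁽ʳ⁾}(u))` over the unit sphere, and
`A⁽ʳ⁺¹⁾ = A⁽ʳ⁾(I − v_r v_rᵀ)`, `B⁽ʳ⁺¹⁾ = B⁽ʳ⁾(I − v_r v_rᵀ)` for `r = 1, …, d`,
the total incremental errors of the two groups coincide. -/
theorem stmt10 {a b n : ℕ} (d : ℕ)
    (A : Matrix (Fin a) (Fin n) ℝ) (B : Matrix (Fin b) (Fin n) ℝ)
    (Aseq : ℕ → Matrix (Fin a) (Fin n) ℝ) (Bseq : ℕ → Matrix (Fin b) (Fin n) ℝ)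
    (v : ℕ → Fin n → ℝ)
    (hA1 : Aseq 1 = A) (hB1 : Bseq 1 = B)
    (hunit : ∀ r, 1 ≤ r → r ≤ d → v r ⬝ᵥ v r = 1)
    (hmin : ∀ r, 1 ≤ r → r ≤ d → ∀ u : Fin n → ℝ, u ⬝ᵥ u = 1 →
      max (fairLoss (Aseq r) (v r)) (fairLoss (Bseq r) (v r)) ≤
        max (fairLoss (Aseq r) u) (fairLoss (Bseq r) u))
    (hArec : ∀ r, 1 ≤ r → r ≤ d →
      Aseq (r + 1) = Aseq r * (1 - Matrix.vecMulVec (v r) (v r)))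
    (hBrec : ∀ r, 1 ≤ r → r ≤ d →
      Bseq (r + 1) = Bseq r * (1 - Matrix.vecMulVec (v r) (v r))) :
    ∑ r ∈ Finset.Icc 1 d, fairLoss (Aseq r) (v r) =
      ∑ r ∈ Finset.Icc 1 d, fairLoss (Bseq r) (v r) := by
  refine Finset.sum_congr rfl fun r hr => ?_
  rw [Finset.mem_Icc] at hr
  have hS : ((Aseq r)ᵀ * Aseq r)ᵀ = (Aseq r)ᵀ * Aseq r := by
    rw [Matrix.transpose_mul, Matrix.transpose_transpose]
  have hT : ((Bseq r)ᵀ * Bseq r)ᵀ = (Bseq r)ᵀ * Bseq r := by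
    rw [Matrix.transpose_mul, Matrix.transpose_transpose]
  exact eq_of_min ((Aseq r)ᵀ * Aseq r) ((Bseq r)ᵀ * Bseq r) hS hT (v r)
    (hunit r hr.1 hr.2) (fun u hu => hmin r hr.1 hr.2 u hu)
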